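/- arXiv:2011.06975 — 2 statements merged into one kernel-verified Lean document; each statement's English description precedes it below -/
import Mathlib

section
/- Let α₁, …, α_N be pairwise distinct complex numbers of modulus 1 and c₁, …, c_N ∈ ℂ with c₁ ≠ 0, and set f(z) = Σ_{k=1}^N c_k log(1 - α_k z). Then lim sup_{|z|→1⁻} (1-|z|²)|f'(z)| ≥ 2|c₁| > 0; in particular f does not belong to the little Bloch space. -/
open Filter Topology Complex Set

theorem stmt7 (N : ℕ) (α c : Fin (N + 1) → ℂ)
    (hα : ∀ k, ‖α k‖ = 1) (hinj : Function.Injective α)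
    (hc : c 0 ≠ 0)
    (f : ℂ → ℂ) (hf : f = fun z => ∑ k, c k * Complex.log (1 - α k * z)) :
    (∀ ε : ℝ, 0 < ε → ∀ δ : ℝ, 0 < δ →
      ∃ z : ℂ, ‖z‖ < 1 ∧ 1 - δ < ‖z‖ ∧
        2 * ‖c 0‖ - ε < (1 - ‖z‖ ^ 2) * ‖deriv f z‖) ∧
    ¬ (∀ ε : ℝ, 0 < ε → ∃ δ : ℝ, 0 < δ ∧ ∀ z : ℂ, ‖z‖ < 1 →
        1 - δ < ‖z‖ → (1 - ‖z‖ ^ 2) * ‖deriv f z‖ < ε) := by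
  have hα0ne : α 0 ≠ 0 := by
    intro h
    have := hα 0
    rw [h] at this
    simp at this
  -- derivative formula
  have hderiv : ∀ z : ℂ, ‖z‖ < 1 →
      deriv f z = ∑ k, c k * ((1 - α k * z)⁻¹ * (-(α k))) := by
    intro z hz
    have H : HasDerivAt f (∑ k, c k * ((1 - α k * z)⁻¹ * (-(α k)))) z := by
      rw [hf]
      apply HasDerivAt.fun_sum
      intro k _
      have h1 : HasDerivAt (fun w : ℂ => 1 - α k * w) (-(α k)) z := by
        simpa using ((hasDerivAt_id z).const_mul (α k)).const_sub 1
      have h2 : (1 - α k * z) ∈ Complex.slitPlane := by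
        rw [Complex.mem_slitPlane_iff]
        left
        have h3 : (α k * z).re ≤ ‖α k * z‖ := Complex.re_le_norm _
        have h4 : ‖α k * z‖ < 1 := by
          rw [norm_mul, hα k, one_mul]; exact hz
        simp only [Complex.sub_re, Complex.one_re]
        linarith
      have h5 : HasDerivAt (fun w : ℂ => Complex.log (1 - α k * w))
          ((1 - α k * z)⁻¹ * (-(α k))) z :=
        by have := (Complex.hasDerivAt_log h2).comp z h1; exact this
      exact h5.const_mul (c k)
    exact H.deriv
  -- the key limit statement along z = r * (α 0)⁻¹
  have key : Filter.Tendsto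
      (fun r : ℝ => (1 - r ^ 2) * ‖deriv f ((r : ℂ) * (α 0)⁻¹)‖)
      (𝓝[Set.Ioo (0:ℝ) 1] 1) (𝓝 (2 * ‖c 0‖)) := by
    -- complex-valued version
    have habsz : ∀ r : ℝ, r ∈ Set.Ioo (0:ℝ) 1 → ‖(r:ℂ) * (α 0)⁻¹‖ = r := by
      intro r hr
      rw [norm_mul, norm_inv, hα 0, inv_one, mul_one, Complex.norm_real, Real.norm_eq_abs,
        abs_of_pos hr.1]
    have hL : Filter.Tendsto
        (fun r : ℝ => ∑ k, (1 - (r:ℂ) ^ 2) * (c k * ((1 - α k * ((r:ℂ) * (α 0)⁻¹))⁻¹ * (-(α k)))))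
        (𝓝[Set.Ioo (0:ℝ) 1] 1) (𝓝 (2 * (c 0 * (-(α 0))))) := by
      have : Filter.Tendsto
          (fun r : ℝ => ∑ k, (1 - (r:ℂ) ^ 2) * (c k * ((1 - α k * ((r:ℂ) * (α 0)⁻¹))⁻¹ * (-(α k)))))
          (𝓝[Set.Ioo (0:ℝ) 1] 1)
          (𝓝 (∑ k : Fin (N+1), if k = 0 then 2 * (c 0 * (-(α 0))) else 0)) := by
        apply tendsto_finset_sum
        intro k _
        by_cases hk : k = 0
        · subst hk
          simp only [if_pos rfl]
          -- on Ioo 0 1 the term equals (1+r) * (c 0 * (-(α 0)))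
          have heq : ∀ r : ℝ, r ∈ Set.Ioo (0:ℝ) 1 →
              (1 - (r:ℂ) ^ 2) * (c 0 * ((1 - α 0 * ((r:ℂ) * (α 0)⁻¹))⁻¹ * (-(α 0))))
              = (1 + (r:ℂ)) * (c 0 * (-(α 0))) := by
            intro r hr
            have h1 : α 0 * ((r:ℂ) * (α 0)⁻¹) = (r:ℂ) := by
              field_simp
            rw [h1]
            have h2 : (1 : ℂ) - (r:ℂ) ≠ 0 := by
              intro h
              have : (r:ℂ) = 1 := by linear_combination -h
              have : r = 1 := by exact_mod_cast this
              linarith [hr.2]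
            field_simp
            ring
          have ht : Filter.Tendsto (fun r : ℝ => (1 + (r:ℂ)) * (c 0 * (-(α 0))))
              (𝓝[Set.Ioo (0:ℝ) 1] 1) (𝓝 (2 * (c 0 * (-(α 0))))) := by
            have : Filter.Tendsto (fun r : ℝ => (1 + (r:ℂ)) * (c 0 * (-(α 0)))) (𝓝 1)
                (𝓝 ((1 + (1:ℝ)) * (c 0 * (-(α 0))))) := by
              apply Tendsto.mul _ tendsto_const_nhds
              exact (tendsto_const_nhds.add ((Complex.continuous_ofReal.tendsto 1)))
            have h2 : ((1:ℂ) + (1:ℝ)) * (c 0 * (-(α 0))) = 2 * (c 0 * (-(α 0))) := by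
              norm_num
            rw [h2] at this
            exact this.mono_left nhdsWithin_le_nhds
          exact ht.congr' (by filter_upwards [self_mem_nhdsWithin] with r hr using (heq r hr).symm)
        · simp only [if_neg hk]
          have hne : (1 : ℂ) - α k * (α 0)⁻¹ ≠ 0 := by
            intro h
            have : α k * (α 0)⁻¹ = 1 := by linear_combination -h
            have : α k = α 0 := by
              field_simp at this
              exact this
            exact hk (hinj this)
          have h0 : Filter.Tendsto (fun r : ℝ => (1 - (r:ℂ) ^ 2)) (𝓝 1) (𝓝 0) := by
            have : Filter.Tendsto (fun r : ℝ => (1 - (r:ℂ) ^ 2)) (𝓝 1)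
                (𝓝 (1 - ((1:ℝ):ℂ) ^ 2)) := by
              exact tendsto_const_nhds.sub ((Complex.continuous_ofReal.tendsto 1).pow 2)
            simpa using this
          have h1 : Filter.Tendsto
              (fun r : ℝ => c k * ((1 - α k * ((r:ℂ) * (α 0)⁻¹))⁻¹ * (-(α k)))) (𝓝 1)
              (𝓝 (c k * ((1 - α k * (α 0)⁻¹)⁻¹ * (-(α k))))) := by
            apply Tendsto.const_mul
            apply Tendsto.mul_const
            apply Tendsto.inv₀ _ (by simpa using hne)
            have : Filter.Tendsto (fun r : ℝ => (1 : ℂ) - α k * ((r:ℂ) * (α 0)⁻¹)) (𝓝 1)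
                (𝓝 (1 - α k * (((1:ℝ):ℂ) * (α 0)⁻¹))) :=
              tendsto_const_nhds.sub (((Complex.continuous_ofReal.tendsto 1).mul_const _).const_mul _)
            simpa using this
          have := h0.mul h1
          rw [zero_mul] at this
          exact this.mono_left nhdsWithin_le_nhds
      simpa using this
    -- pass to absolute values
    have hAbs : Filter.Tendsto
        (fun r : ℝ => ‖∑ k, (1 - (r:ℂ) ^ 2) * (c k * ((1 - α k * ((r:ℂ) * (α 0)⁻¹))⁻¹ * (-(α k))))‖)
        (𝓝[Set.Ioo (0:ℝ) 1] 1) (𝓝 (‖2 * (c 0 * (-(α 0)))‖)) :=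
      (continuous_norm.tendsto _).comp hL
    have habsL : ‖2 * (c 0 * (-(α 0)))‖ = 2 * ‖c 0‖ := by
      simp [map_mul, hα 0]
    rw [habsL] at hAbs
    apply hAbs.congr'
    filter_upwards [self_mem_nhdsWithin] with r hr
    have hz : ‖(r:ℂ) * (α 0)⁻¹‖ < 1 := by rw [habsz r hr]; exact hr.2
    rw [hderiv _ hz, ← Finset.mul_sum, norm_mul]
    have : ‖1 - (r:ℂ) ^ 2‖ = 1 - r ^ 2 := by
      have h1 : ((1 - r ^ 2 : ℝ) : ℂ) = 1 - (r:ℂ) ^ 2 := by push_cast; ring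
      rw [← h1, Complex.norm_real, Real.norm_eq_abs, abs_of_pos]
      nlinarith [hr.1, hr.2]
    rw [this]
  -- main extraction
  have main : ∀ ε : ℝ, 0 < ε → ∀ δ : ℝ, 0 < δ →
      ∃ z : ℂ, ‖z‖ < 1 ∧ 1 - δ < ‖z‖ ∧
        2 * ‖c 0‖ - ε < (1 - ‖z‖ ^ 2) * ‖deriv f z‖ := by
    intro ε hε δ hδ
    have hne : (𝓝[Set.Ioo (0:ℝ) 1] (1:ℝ)).NeBot := right_nhdsWithin_Ioo_neBot one_pos
    have E1 : ∀ᶠ r : ℝ in 𝓝[Set.Ioo (0:ℝ) 1] 1,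
        2 * ‖c 0‖ - ε < (1 - r ^ 2) * ‖deriv f ((r:ℂ) * (α 0)⁻¹)‖ :=
      key.eventually (eventually_gt_nhds (by linarith))
    have E2 : ∀ᶠ r : ℝ in 𝓝[Set.Ioo (0:ℝ) 1] 1, 1 - δ < r :=
      eventually_nhdsWithin_of_eventually_nhds (eventually_gt_nhds (by linarith))
    have E3 : ∀ᶠ r : ℝ in 𝓝[Set.Ioo (0:ℝ) 1] 1, r ∈ Set.Ioo (0:ℝ) 1 := self_mem_nhdsWithin
    obtain ⟨r, h1, h2', h3⟩ := (E1.and (E2.and E3)).exists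
    have h2 := h2'
    refine ⟨(r:ℂ) * (α 0)⁻¹, ?_, ?_, ?_⟩
    · rw [norm_mul, norm_inv, hα 0, inv_one, mul_one, Complex.norm_real, Real.norm_eq_abs,
        abs_of_pos h3.1]
      exact h3.2
    · rw [norm_mul, norm_inv, hα 0, inv_one, mul_one, Complex.norm_real, Real.norm_eq_abs,
        abs_of_pos h3.1]
      exact h2
    · rw [norm_mul, norm_inv, hα 0, inv_one, mul_one, Complex.norm_real, Real.norm_eq_abs,
        abs_of_pos h3.1]
      exact h1
  refine ⟨main, ?_⟩
  intro hcon
  have hc0 : 0 < ‖c 0‖ := by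
    simpa using hc
  obtain ⟨δ, hδ, hδ2⟩ := hcon (‖c 0‖) hc0
  obtain ⟨z, hz1, hz2, hz3⟩ := main (‖c 0‖) hc0 δ hδ
  have := hδ2 z hz1 hz2
  linarith
end

section
/- If A is a subalgebra of the Bloch space B (under pointwise multiplication) that is closed in the Bloch norm, then every element of A is a bounded function on the unit disk. -/
noncomputable def blochSet (f : ℂ → ℂ) : Set ℝ :=
  (fun z : ℂ => (1 - ‖z‖ ^ 2) * ‖deriv f z‖) '' Metric.ball 0 1

noncomputable def blochDist (f g : ℂ → ℂ) : ℝ :=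
  ‖f 0 - g 0‖ + sSup (blochSet (fun z => f z - g z))

namespace BlochAux

open Metric Complex Filter

noncomputable def bN (f : ℂ → ℂ) : ℝ := ‖f 0‖ + sSup (blochSet f)

def IsBloch (f : ℂ → ℂ) : Prop :=
  DifferentiableOn ℂ f (Metric.ball 0 1) ∧ BddAbove (blochSet f)

lemma mem_blochSet {f : ℂ → ℂ} {z : ℂ} (hz : z ∈ Metric.ball (0:ℂ) 1) :
    (1 - ‖z‖ ^ 2) * ‖deriv f z‖ ∈ blochSet f := ⟨z, hz, rfl⟩

lemma blochSet_nonempty (f : ℂ → ℂ) : (blochSet f).Nonempty :=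
  ⟨_, mem_blochSet (Metric.mem_ball_self one_pos)⟩

lemma abs_lt_one {z : ℂ} (hz : z ∈ Metric.ball (0:ℂ) 1) : ‖z‖ < 1 := by
  simpa using mem_ball_zero_iff.mp hz

lemma weight_pos {z : ℂ} (hz : z ∈ Metric.ball (0:ℂ) 1) : 0 < 1 - ‖z‖ ^ 2 := by
  have h := abs_lt_one hz
  have h0 : 0 ≤ ‖z‖ := norm_nonneg z
  nlinarith

lemma blochSet_mem_nonneg {f : ℂ → ℂ} {x : ℝ} (hx : x ∈ blochSet f) : 0 ≤ x := by
  obtain ⟨z, hz, rfl⟩ := hx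
  exact mul_nonneg (weight_pos hz).le (norm_nonneg _)

lemma sSup_blochSet_nonneg (f : ℂ → ℂ) (hf : BddAbove (blochSet f)) :
    0 ≤ sSup (blochSet f) := by
  obtain ⟨x, hx⟩ := blochSet_nonempty f
  exact le_trans (blochSet_mem_nonneg hx) (le_csSup hf hx)

lemma bN_nonneg {f : ℂ → ℂ} (hf : BddAbove (blochSet f)) : 0 ≤ bN f :=
  add_nonneg (norm_nonneg _) (sSup_blochSet_nonneg f hf)

lemma deriv_le_sSup {f : ℂ → ℂ} (hf : BddAbove (blochSet f)) {z : ℂ}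
    (hz : z ∈ Metric.ball (0:ℂ) 1) :
    (1 - ‖z‖ ^ 2) * ‖deriv f z‖ ≤ sSup (blochSet f) :=
  le_csSup hf (mem_blochSet hz)

lemma sSup_blochSet_le {f : ℂ → ℂ} {a : ℝ} (ha : 0 ≤ a)
    (h : ∀ z ∈ Metric.ball (0:ℂ) 1,
      (1 - ‖z‖ ^ 2) * ‖deriv f z‖ ≤ a) :
    sSup (blochSet f) ≤ a :=
  Real.sSup_le (by rintro x ⟨z, hz, rfl⟩; exact h z hz) ha

lemma bddAbove_blochSet {f : ℂ → ℂ} {a : ℝ}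
    (h : ∀ z ∈ Metric.ball (0:ℂ) 1,
      (1 - ‖z‖ ^ 2) * ‖deriv f z‖ ≤ a) :
    BddAbove (blochSet f) :=
  ⟨a, by rintro x ⟨z, hz, rfl⟩; exact h z hz⟩



/-- evaluation constant -/
noncomputable def KR (r : ℝ) : ℝ := r / (1 - ((1 + r) / 2) ^ 2)

lemma KR_nonneg {r : ℝ} (h0 : 0 ≤ r) (hr : r < 1) : 0 ≤ KR r := by
  have : (0:ℝ) < 1 - ((1 + r) / 2) ^ 2 := by nlinarith
  exact div_nonneg h0 this.le

/-- mean value bound on the disc -/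
lemma abs_sub_le_KR {f : ℂ → ℂ} (hf : IsBloch f) {r : ℝ} (h0 : 0 ≤ r) (hr : r < 1)
    {z : ℂ} (hz : ‖z‖ ≤ r) :
    ‖f z - f 0‖ ≤ sSup (blochSet f) * KR r := by
  obtain ⟨hdiff, hbdd⟩ := hf
  set s : ℝ := (1 + r) / 2 with hs
  have hs1 : s < 1 := by rw [hs]; linarith
  have hspos : 0 < s := by rw [hs]; linarith
  have hden : (0:ℝ) < 1 - s ^ 2 := by nlinarith
  set M : ℝ := sSup (blochSet f) with hM
  have hMnn : 0 ≤ M := sSup_blochSet_nonneg f hbdd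
  have key : ∀ x ∈ Metric.ball (0:ℂ) s, ‖deriv f x‖ ≤ M / (1 - s ^ 2) := by
    intro x hx
    have hxs : ‖x‖ < s := by
      simpa using mem_ball_zero_iff.mp hx
    have hx1 : x ∈ Metric.ball (0:ℂ) 1 := by
      rw [mem_ball_zero_iff]; linarith
    have h1 : (1 - ‖x‖ ^ 2) * ‖deriv f x‖ ≤ M := deriv_le_sSup hbdd hx1
    have h2 : (0:ℝ) < 1 - ‖x‖ ^ 2 := weight_pos hx1
    have h3 : 1 - s ^ 2 ≤ 1 - ‖x‖ ^ 2 := by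
      have := norm_nonneg x; nlinarith
    rw [le_div_iff₀ hden]
    calc ‖deriv f x‖ * (1 - s ^ 2)
        ≤ ‖deriv f x‖ * (1 - ‖x‖ ^ 2) :=
          mul_le_mul_of_nonneg_left h3 (norm_nonneg _)
      _ ≤ M := by linarith [h1]
  have hdiff' : ∀ x ∈ Metric.ball (0:ℂ) s, DifferentiableAt ℂ f x := by
    intro x hx
    have hxs : ‖x‖ < s := by
      simpa using mem_ball_zero_iff.mp hx
    have hx1 : x ∈ Metric.ball (0:ℂ) 1 := by
      rw [mem_ball_zero_iff]; linarith
    exact hdiff.differentiableAt (Metric.isOpen_ball.mem_nhds hx1)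
  have hzs : z ∈ Metric.ball (0:ℂ) s := by
    rw [mem_ball_zero_iff]
    calc ‖z‖ ≤ r := hz
      _ < s := by rw [hs]; linarith
  have h0s : (0:ℂ) ∈ Metric.ball (0:ℂ) s := Metric.mem_ball_self hspos
  have := (convex_ball (0:ℂ) s).norm_image_sub_le_of_norm_deriv_le hdiff' key h0s hzs
  rw [sub_zero] at this
  calc ‖f z - f 0‖ ≤ M / (1 - s ^ 2) * ‖z‖ := this
    _ ≤ M / (1 - s ^ 2) * r := by
        apply mul_le_mul_of_nonneg_left hz (div_nonneg hMnn hden.le)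
    _ = M * KR r := by rw [KR, ← hs]; ring

lemma abs_le_bN {f : ℂ → ℂ} (hf : IsBloch f) {r : ℝ} (h0 : 0 ≤ r) (hr : r < 1)
    {z : ℂ} (hz : ‖z‖ ≤ r) :
    ‖f z‖ ≤ (1 + KR r) * bN f := by
  have h1 := abs_sub_le_KR hf h0 hr hz
  have h2 : ‖f z‖ ≤ ‖f 0‖ + ‖f z - f 0‖ := by
    calc ‖f z‖ = ‖f 0 + (f z - f 0)‖ := by ring_nf
      _ ≤ _ := norm_add_le _ _
  have hK := KR_nonneg h0 hr
  have hM := sSup_blochSet_nonneg f hf.2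
  have h3 := norm_nonneg (f 0)
  rw [bN]
  nlinarith


lemma diffAt {f : ℂ → ℂ} (hf : DifferentiableOn ℂ f (Metric.ball 0 1)) {z : ℂ}
    (hz : z ∈ Metric.ball (0:ℂ) 1) : DifferentiableAt ℂ f z :=
  hf.differentiableAt (Metric.isOpen_ball.mem_nhds hz)

lemma deriv_sub_apply {f g : ℂ → ℂ} (hf : DifferentiableOn ℂ f (Metric.ball 0 1))
    (hg : DifferentiableOn ℂ g (Metric.ball 0 1)) {z : ℂ} (hz : z ∈ Metric.ball (0:ℂ) 1) :
    deriv (fun w => f w - g w) z = deriv f z - deriv g z :=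
  deriv_sub (diffAt hf hz) (diffAt hg hz)

lemma isBloch_sub {f g : ℂ → ℂ} (hf : IsBloch f) (hg : IsBloch g) :
    IsBloch (fun z => f z - g z) := by
  refine ⟨hf.1.sub hg.1, bddAbove_blochSet (a := sSup (blochSet f) + sSup (blochSet g)) ?_⟩
  intro z hz
  rw [deriv_sub_apply hf.1 hg.1 hz]
  calc (1 - ‖z‖ ^ 2) * ‖deriv f z - deriv g z‖
      ≤ (1 - ‖z‖ ^ 2) * (‖deriv f z‖ + ‖deriv g z‖) :=
        mul_le_mul_of_nonneg_left
          (by simpa [sub_eq_add_neg] using norm_add_le (deriv f z) (-deriv g z))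
          (weight_pos hz).le
    _ = (1 - ‖z‖ ^ 2) * ‖deriv f z‖
        + (1 - ‖z‖ ^ 2) * ‖deriv g z‖ := by ring
    _ ≤ _ := add_le_add (deriv_le_sSup hf.2 hz) (deriv_le_sSup hg.2 hz)

lemma blochDist_eq (f g : ℂ → ℂ) : blochDist f g = bN (fun z => f z - g z) := rfl

lemma blochDist_nonneg {f g : ℂ → ℂ} (hf : IsBloch f) (hg : IsBloch g) :
    0 ≤ blochDist f g := by
  rw [blochDist_eq]; exact bN_nonneg (isBloch_sub hf hg).2

lemma abs_sub_apply_le {f g : ℂ → ℂ} (hf : IsBloch f) (hg : IsBloch g) {r : ℝ}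
    (h0 : 0 ≤ r) (hr : r < 1) {z : ℂ} (hz : ‖z‖ ≤ r) :
    ‖f z - g z‖ ≤ (1 + KR r) * blochDist f g := by
  rw [blochDist_eq]
  exact abs_le_bN (isBloch_sub hf hg) h0 hr hz

lemma weighted_deriv_sub_le {f g : ℂ → ℂ} (hf : IsBloch f) (hg : IsBloch g) {z : ℂ}
    (hz : z ∈ Metric.ball (0:ℂ) 1) :
    (1 - ‖z‖ ^ 2) * ‖deriv f z - deriv g z‖ ≤ blochDist f g := by
  have h1 : (1 - ‖z‖ ^ 2) * ‖deriv (fun w => f w - g w) z‖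
      ≤ sSup (blochSet (fun w => f w - g w)) := deriv_le_sSup (isBloch_sub hf hg).2 hz
  rw [deriv_sub_apply hf.1 hg.1 hz] at h1
  have := norm_nonneg (f 0 - g 0)
  rw [blochDist]
  linarith

lemma blochDist_triangle {f g k : ℂ → ℂ} (hf : IsBloch f) (hg : IsBloch g) (hk : IsBloch k) :
    blochDist f k ≤ blochDist f g + blochDist g k := by
  have hfg := blochDist_nonneg hf hg
  have hgk := blochDist_nonneg hg hk
  have h1 := sSup_blochSet_nonneg _ (isBloch_sub hf hg).2
  have h2 := sSup_blochSet_nonneg _ (isBloch_sub hg hk).2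
  have hsup : sSup (blochSet (fun z => f z - k z))
      ≤ sSup (blochSet (fun z => f z - g z)) + sSup (blochSet (fun z => g z - k z)) := by
    apply sSup_blochSet_le (by linarith)
    intro z hz
    rw [deriv_sub_apply hf.1 hk.1 hz]
    have e : deriv f z - deriv k z = (deriv f z - deriv g z) + (deriv g z - deriv k z) := by ring
    rw [e]
    calc (1 - ‖z‖ ^ 2) * ‖(deriv f z - deriv g z) + (deriv g z - deriv k z)‖
        ≤ (1 - ‖z‖ ^ 2) *
          (‖deriv f z - deriv g z‖ + ‖deriv g z - deriv k z‖) :=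
          mul_le_mul_of_nonneg_left (norm_add_le _ _) (weight_pos hz).le
      _ = (1 - ‖z‖ ^ 2) * ‖deriv f z - deriv g z‖
          + (1 - ‖z‖ ^ 2) * ‖deriv g z - deriv k z‖ := by ring
      _ ≤ sSup (blochSet (fun z => f z - g z)) + sSup (blochSet (fun z => g z - k z)) := by
          apply add_le_add
          · have := deriv_le_sSup (isBloch_sub hf hg).2 hz
            rwa [deriv_sub_apply hf.1 hg.1 hz] at this
          · have := deriv_le_sSup (isBloch_sub hg hk).2 hz
            rwa [deriv_sub_apply hg.1 hk.1 hz] at this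
  have habs : ‖f 0 - k 0‖ ≤ ‖f 0 - g 0‖ + ‖g 0 - k 0‖ := by
    have : f 0 - k 0 = (f 0 - g 0) + (g 0 - k 0) := by ring
    rw [this]; exact norm_add_le _ _
  rw [blochDist, blochDist, blochDist]
  linarith [hsup, habs]

lemma deriv_smul_apply {g : ℂ → ℂ} (hg : DifferentiableOn ℂ g (Metric.ball 0 1)) (c : ℂ)
    {z : ℂ} (hz : z ∈ Metric.ball (0:ℂ) 1) :
    deriv (fun w => c * g w) z = c * deriv g z :=
  deriv_const_mul c (diffAt hg hz)

lemma isBloch_smul {g : ℂ → ℂ} (hg : IsBloch g) (c : ℂ) : IsBloch (fun z => c * g z) := by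
  refine ⟨hg.1.const_mul c, bddAbove_blochSet (a := ‖c‖ * sSup (blochSet g)) ?_⟩
  intro z hz
  rw [deriv_smul_apply hg.1 c hz, norm_mul]
  calc (1 - ‖z‖ ^ 2) * (‖c‖ * ‖deriv g z‖)
      = ‖c‖ * ((1 - ‖z‖ ^ 2) * ‖deriv g z‖) := by ring
    _ ≤ ‖c‖ * sSup (blochSet g) :=
        mul_le_mul_of_nonneg_left (deriv_le_sSup hg.2 hz) (norm_nonneg c)

lemma sSup_blochSet_smul {g : ℂ → ℂ} (hg : IsBloch g) (c : ℂ) :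
    sSup (blochSet (fun z => c * g z)) = ‖c‖ * sSup (blochSet g) := by
  rcases eq_or_ne c 0 with rfl | hc
  · have hfun : (fun z => (0:ℂ) * g z) = fun _ : ℂ => (0:ℂ) := by funext z; ring
    have hset : blochSet (fun _ : ℂ => (0:ℂ)) = {0} := by
      ext x
      constructor
      · rintro ⟨z, hz, rfl⟩; simp
      · rintro rfl; exact ⟨0, Metric.mem_ball_self one_pos, by simp⟩
    rw [hfun, hset, csSup_singleton, norm_zero, zero_mul]
  · have hcpos : 0 < ‖c‖ := norm_pos_iff.mpr hc
    apply le_antisymm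
    · apply sSup_blochSet_le (mul_nonneg hcpos.le (sSup_blochSet_nonneg _ hg.2))
      intro z hz
      rw [deriv_smul_apply hg.1 c hz, norm_mul]
      calc (1 - ‖z‖ ^ 2) * (‖c‖ * ‖deriv g z‖)
          = ‖c‖ * ((1 - ‖z‖ ^ 2) * ‖deriv g z‖) := by ring
        _ ≤ ‖c‖ * sSup (blochSet g) :=
            mul_le_mul_of_nonneg_left (deriv_le_sSup hg.2 hz) (norm_nonneg c)
    · rw [← le_div_iff₀' hcpos]
      apply Real.sSup_le
      · rintro x ⟨z, hz, rfl⟩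
        rw [le_div_iff₀' hcpos]
        calc ‖c‖ * ((1 - ‖z‖ ^ 2) * ‖deriv g z‖)
            = (1 - ‖z‖ ^ 2) * ‖deriv (fun w => c * g w) z‖ := by
              rw [deriv_smul_apply hg.1 c hz, norm_mul]; ring
          _ ≤ sSup (blochSet (fun z => c * g z)) := deriv_le_sSup (isBloch_smul hg c).2 hz
      · exact div_nonneg (sSup_blochSet_nonneg _ (isBloch_smul hg c).2) hcpos.le

lemma bN_smul {g : ℂ → ℂ} (hg : IsBloch g) (c : ℂ) :
    bN (fun z => c * g z) = ‖c‖ * bN g := by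
  rw [bN, bN, sSup_blochSet_smul hg c]
  simp only [norm_mul]
  ring


lemma one_le_one_add_KR {r : ℝ} (h0 : 0 ≤ r) (hr : r < 1) : (1:ℝ) ≤ 1 + KR r := by
  linarith [KR_nonneg h0 hr]

/-- Completeness of the Bloch space. -/
lemma bloch_complete {g : ℕ → ℂ → ℂ} (hg : ∀ n, IsBloch (g n))
    (hC : ∀ ε : ℝ, 0 < ε → ∃ N, ∀ m ≥ N, ∀ n ≥ N, blochDist (g m) (g n) ≤ ε) :
    ∃ G : ℂ → ℂ, IsBloch G ∧ ∀ ε : ℝ, 0 < ε → ∃ N, ∀ n ≥ N, blochDist (g n) G ≤ ε := by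
  classical
  set G : ℂ → ℂ := fun z => limUnder Filter.atTop (fun n => g n z) with hG
  have hptCauchy : ∀ z ∈ Metric.ball (0:ℂ) 1, CauchySeq (fun n => g n z) := by
    intro z hz
    rw [Metric.cauchySeq_iff]
    intro ε hε
    set r : ℝ := ‖z‖ with hr
    have h0r : 0 ≤ r := norm_nonneg z
    have hr1 : r < 1 := abs_lt_one hz
    have hKpos : (0:ℝ) < 1 + KR r := lt_of_lt_of_le one_pos (one_le_one_add_KR h0r hr1)
    obtain ⟨N, hN⟩ := hC (ε / (2 * (1 + KR r))) (by positivity)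
    refine ⟨N, fun m hm n hn => ?_⟩
    have h1 : ‖g m z - g n z‖ ≤ (1 + KR r) * blochDist (g m) (g n) :=
      abs_sub_apply_le (hg m) (hg n) h0r hr1 le_rfl
    have h2 := hN m hm n hn
    rw [Complex.dist_eq]
    calc ‖g m z - g n z‖ ≤ (1 + KR r) * (ε / (2 * (1 + KR r))) := by
          refine h1.trans (mul_le_mul_of_nonneg_left h2 hKpos.le)
      _ = ε / 2 := by field_simp
      _ < ε := by linarith
  have hlim : ∀ z ∈ Metric.ball (0:ℂ) 1,
      Filter.Tendsto (fun n => g n z) Filter.atTop (nhds (G z)) := by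
    intro z hz
    have := (hptCauchy z hz).tendsto_limUnder
    simpa [hG] using this
  have hTLU : TendstoLocallyUniformlyOn g G Filter.atTop (Metric.ball (0:ℂ) 1) := by
    rw [tendstoLocallyUniformlyOn_iff_forall_isCompact Metric.isOpen_ball]
    intro K hK hKc
    rcases K.eq_empty_or_nonempty with rfl | hKne
    · simp [TendstoUniformlyOn]
    obtain ⟨z₀, hz₀K, hz₀max⟩ := hKc.exists_isMaxOn hKne
      (continuous_norm.continuousOn : ContinuousOn (fun z : ℂ => ‖z‖) K)
    have hz₀ : ∀ y ∈ K, ‖y‖ ≤ ‖z₀‖ := fun y hy => hz₀max hy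
    set r : ℝ := ‖z₀‖ with hrdef
    have h0r : 0 ≤ r := norm_nonneg _
    have hr1 : r < 1 := by
      have := hK hz₀K
      simpa [hrdef] using mem_ball_zero_iff.mp this
    have hKr : ∀ x ∈ K, ‖x‖ ≤ r := by
      intro x hx
      simpa using hz₀ x hx
    have hKpos : (0:ℝ) < 1 + KR r := lt_of_lt_of_le one_pos (one_le_one_add_KR h0r hr1)
    rw [Metric.tendstoUniformlyOn_iff]
    intro ε hε
    obtain ⟨N, hN⟩ := hC (ε / (2 * (1 + KR r))) (by positivity)
    rw [Filter.eventually_atTop]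
    refine ⟨N, fun n hn x hx => ?_⟩
    have hxball : x ∈ Metric.ball (0:ℂ) 1 := hK hx
    have hbound : ∀ m ≥ N, ‖g n x - g m x‖ ≤ ε / 2 := by
      intro m hm
      have h1 : ‖g n x - g m x‖ ≤ (1 + KR r) * blochDist (g n) (g m) :=
        abs_sub_apply_le (hg n) (hg m) h0r hr1 (hKr x hx)
      calc ‖g n x - g m x‖ ≤ (1 + KR r) * (ε / (2 * (1 + KR r))) :=
            h1.trans (mul_le_mul_of_nonneg_left (hN n hn m hm) hKpos.le)
        _ = ε / 2 := by field_simp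
    have hctend : Filter.Tendsto (fun m => ‖g n x - g m x‖) Filter.atTop
        (nhds (‖g n x - G x‖)) := by
      have h1 : Filter.Tendsto (fun m => g n x - g m x) Filter.atTop
          (nhds (g n x - G x)) := tendsto_const_nhds.sub (hlim x hxball)
      exact (continuous_norm.tendsto _).comp h1
    have hfin : ‖g n x - G x‖ ≤ ε / 2 :=
      le_of_tendsto hctend (Filter.eventually_atTop.mpr ⟨N, hbound⟩)
    have : dist (G x) (g n x) = ‖g n x - G x‖ := by
      rw [dist_comm, Complex.dist_eq]
    rw [this]
    linarith
  have hGdiff : DifferentiableOn ℂ G (Metric.ball 0 1) :=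
    hTLU.differentiableOn (Filter.Eventually.of_forall fun n => (hg n).1) Metric.isOpen_ball
  have hderiv : TendstoLocallyUniformlyOn (fun n => deriv (g n)) (deriv G) Filter.atTop
      (Metric.ball (0:ℂ) 1) :=
    hTLU.deriv (Filter.Eventually.of_forall fun n => (hg n).1) Metric.isOpen_ball
  have hderivpt : ∀ z ∈ Metric.ball (0:ℂ) 1,
      Filter.Tendsto (fun n => deriv (g n) z) Filter.atTop (nhds (deriv G z)) := by
    intro z hz
    exact hderiv.tendsto_at hz
  -- the key estimate
  have key : ∀ ε : ℝ, 0 < ε → ∃ N, ∀ n ≥ N,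
      (∀ z ∈ Metric.ball (0:ℂ) 1,
        (1 - ‖z‖ ^ 2) * ‖deriv (g n) z - deriv G z‖ ≤ ε) ∧
      ‖g n 0 - G 0‖ ≤ ε := by
    intro ε hε
    obtain ⟨N, hN⟩ := hC ε hε
    refine ⟨N, fun n hn => ⟨?_, ?_⟩⟩
    · intro z hz
      have htend : Filter.Tendsto
          (fun m => (1 - ‖z‖ ^ 2) * ‖deriv (g n) z - deriv (g m) z‖)
          Filter.atTop
          (nhds ((1 - ‖z‖ ^ 2) * ‖deriv (g n) z - deriv G z‖)) := by
        apply Filter.Tendsto.const_mul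
        exact (continuous_norm.tendsto _).comp (tendsto_const_nhds.sub (hderivpt z hz))
      apply le_of_tendsto htend
      rw [Filter.eventually_atTop]
      refine ⟨N, fun m hm => ?_⟩
      exact (weighted_deriv_sub_le (hg n) (hg m) hz).trans (hN n hn m hm)
    · have htend : Filter.Tendsto (fun m => ‖g n 0 - g m 0‖) Filter.atTop
          (nhds (‖g n 0 - G 0‖)) :=
        (continuous_norm.tendsto _).comp
          (tendsto_const_nhds.sub (hlim 0 (Metric.mem_ball_self one_pos)))
      apply le_of_tendsto htend
      rw [Filter.eventually_atTop]
      refine ⟨N, fun m hm => ?_⟩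
      have h2 := hN n hn m hm
      have h3 : 0 ≤ sSup (blochSet (fun z => g n z - g m z)) :=
        sSup_blochSet_nonneg _ (isBloch_sub (hg n) (hg m)).2
      rw [blochDist] at h2
      linarith
  -- G is Bloch
  obtain ⟨N₁, hN₁⟩ := key 1 one_pos
  have hGbdd : BddAbove (blochSet G) := by
    apply bddAbove_blochSet (a := sSup (blochSet (g N₁)) + 1)
    intro z hz
    have h1 := (hN₁ N₁ le_rfl).1 z hz
    have h2 := deriv_le_sSup (hg N₁).2 hz
    have h3 : ‖deriv G z‖ ≤
        ‖deriv (g N₁) z‖ + ‖deriv (g N₁) z - deriv G z‖ := by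
      have h := norm_add_le (deriv (g N₁) z) (deriv G z - deriv (g N₁) z)
      rw [norm_sub_rev (deriv (g N₁) z)]
      simpa using h
    have h4 := weight_pos hz
    nlinarith [mul_le_mul_of_nonneg_left h3 h4.le]
  have hGB : IsBloch G := ⟨hGdiff, hGbdd⟩
  refine ⟨G, hGB, ?_⟩
  intro ε hε
  obtain ⟨N, hN⟩ := key (ε / 2) (by linarith)
  refine ⟨N, fun n hn => ?_⟩
  obtain ⟨hd, hv⟩ := hN n hn
  have hsup : sSup (blochSet (fun z => g n z - G z)) ≤ ε / 2 := by
    apply sSup_blochSet_le (by linarith)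
    intro z hz
    rw [deriv_sub_apply (hg n).1 hGdiff hz]
    exact hd z hz
  rw [blochDist]
  linarith


lemma blochSet_zero : blochSet (fun _ : ℂ => (0:ℂ)) = {0} := by
  ext x
  constructor
  · rintro ⟨z, hz, rfl⟩; simp
  · rintro rfl; exact ⟨0, Metric.mem_ball_self one_pos, by simp⟩

lemma blochDist_self (h : ℂ → ℂ) : blochDist h h = 0 := by
  have hfun : (fun z => h z - h z) = fun _ : ℂ => (0:ℂ) := by funext z; ring
  rw [blochDist, hfun, blochSet_zero, csSup_singleton]
  simp

lemma blochDist_comm {f g : ℂ → ℂ} (hf : DifferentiableOn ℂ f (Metric.ball 0 1))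
    (hg : DifferentiableOn ℂ g (Metric.ball 0 1)) : blochDist f g = blochDist g f := by
  rw [blochDist, blochDist, norm_sub_rev]
  congr 1
  have : blochSet (fun z => f z - g z) = blochSet (fun z => g z - f z) := by
    unfold blochSet
    apply Set.image_congr
    intro z hz
    rw [deriv_sub_apply hf hg hz, deriv_sub_apply hg hf hz, norm_sub_rev]
  rw [this]

lemma bN_sub_le {X Y : ℂ → ℂ} (hX : IsBloch X) (hY : IsBloch Y) :
    bN (fun z => X z - Y z) ≤ bN X + bN Y := by
  have habs : ‖X 0 - Y 0‖ ≤ ‖X 0‖ + ‖Y 0‖ := by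
    simpa [sub_eq_add_neg] using norm_add_le (X 0) (-(Y 0))
  have hsX := sSup_blochSet_nonneg _ hX.2
  have hsY := sSup_blochSet_nonneg _ hY.2
  have hsup : sSup (blochSet (fun z => X z - Y z)) ≤ sSup (blochSet X) + sSup (blochSet Y) := by
    apply sSup_blochSet_le (by linarith)
    intro z hz
    rw [deriv_sub_apply hX.1 hY.1 hz]
    calc (1 - ‖z‖ ^ 2) * ‖deriv X z - deriv Y z‖
        ≤ (1 - ‖z‖ ^ 2) * (‖deriv X z‖ + ‖deriv Y z‖) :=
          mul_le_mul_of_nonneg_left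
            (by simpa [sub_eq_add_neg] using norm_add_le (deriv X z) (-(deriv Y z)))
            (weight_pos hz).le
      _ = (1 - ‖z‖ ^ 2) * ‖deriv X z‖
          + (1 - ‖z‖ ^ 2) * ‖deriv Y z‖ := by ring
      _ ≤ _ := add_le_add (deriv_le_sSup hX.2 hz) (deriv_le_sSup hY.2 hz)
  rw [bN, bN, bN]
  linarith

/-- lower semicontinuity of `g ↦ bN (f * g)` along Bloch-convergent sequences -/
lemma bN_mul_lsc {f G : ℂ → ℂ} {h : ℕ → ℂ → ℂ} {n : ℝ}
    (hf : IsBloch f) (hG : IsBloch G) (hh : ∀ j, IsBloch (h j))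
    (hfh : ∀ j, IsBloch (fun z => f z * h j z)) (hfG : IsBloch (fun z => f z * G z))
    (hdist : Filter.Tendsto (fun j => blochDist (h j) G) Filter.atTop (nhds 0))
    (hbound : ∀ j, bN (fun z => f z * h j z) ≤ n) :
    bN (fun z => f z * G z) ≤ n := by
  have hval : Filter.Tendsto (fun j => h j 0) Filter.atTop (nhds (G 0)) := by
    rw [tendsto_iff_norm_sub_tendsto_zero]
    apply squeeze_zero (fun j => norm_nonneg _) (g := fun j => blochDist (h j) G) _ hdist
    intro j
    have h1 := sSup_blochSet_nonneg _ (isBloch_sub (hh j) hG).2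
    simp only [blochDist]
    linarith
  have hder : ∀ z ∈ Metric.ball (0:ℂ) 1,
      Filter.Tendsto (fun j => deriv (h j) z) Filter.atTop (nhds (deriv G z)) := by
    intro z hz
    have h2 := weight_pos hz
    rw [tendsto_iff_norm_sub_tendsto_zero]
    apply squeeze_zero (fun j => norm_nonneg _)
      (g := fun j => blochDist (h j) G / (1 - ‖z‖ ^ 2))
    · intro j
      have h1 := weighted_deriv_sub_le (hh j) hG hz
      rw [le_div_iff₀ h2]
      linarith
    · have := hdist.div_const (1 - ‖z‖ ^ 2)
      simpa using this
  -- pointwise bound for the limit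
  have hpt : ∀ z ∈ Metric.ball (0:ℂ) 1,
      ‖f 0 * G 0‖
        + (1 - ‖z‖ ^ 2) * ‖deriv (fun w => f w * G w) z‖ ≤ n := by
    intro z hz
    have e : ∀ X : ℂ → ℂ, IsBloch X →
        deriv (fun w => f w * X w) z = deriv f z * X z + f z * deriv X z := by
      intro X hX
      exact deriv_mul (diffAt hf.1 hz) (diffAt hX.1 hz)
    have htend : Filter.Tendsto
        (fun j => ‖f 0 * h j 0‖
          + (1 - ‖z‖ ^ 2) * ‖deriv (fun w => f w * h j w) z‖)
        Filter.atTop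
        (nhds (‖f 0 * G 0‖
          + (1 - ‖z‖ ^ 2) * ‖deriv (fun w => f w * G w) z‖)) := by
      apply Filter.Tendsto.add
      · exact (continuous_norm.tendsto _).comp (Filter.Tendsto.const_mul (f 0) hval)
      · apply Filter.Tendsto.const_mul
        have h1 : Filter.Tendsto (fun j => deriv f z * h j z + f z * deriv (h j) z)
            Filter.atTop (nhds (deriv f z * G z + f z * deriv G z)) := by
          have hptval : Filter.Tendsto (fun j => h j z) Filter.atTop (nhds (G z)) := by
            rw [tendsto_iff_norm_sub_tendsto_zero]
            set r : ℝ := ‖z‖ with hr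
            have h0r : 0 ≤ r := norm_nonneg z
            have hr1 : r < 1 := abs_lt_one hz
            apply squeeze_zero (fun j => norm_nonneg _)
              (g := fun j => (1 + KR r) * blochDist (h j) G)
            · intro j
              exact abs_sub_apply_le (hh j) hG h0r hr1 le_rfl
            · have := hdist.const_mul (1 + KR r)
              simpa using this
          exact ((hptval.const_mul _)).add (((hder z hz).const_mul _))
        have h2 := (continuous_norm.tendsto _).comp h1
        rw [e G hG]
        exact h2.congr fun j => (congrArg (‖·‖) (e (h j) (hh j))).symm
    apply le_of_tendsto htend
    apply Filter.Eventually.of_forall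
    intro j
    have h1 : (1 - ‖z‖ ^ 2) * ‖deriv (fun w => f w * h j w) z‖
        ≤ sSup (blochSet (fun w => f w * h j w)) := deriv_le_sSup (hfh j).2 hz
    have h2 := hbound j
    rw [bN] at h2
    linarith
  -- conclude
  have h0 := hpt 0 (Metric.mem_ball_self one_pos)
  have hnn : (0:ℝ) ≤ (1 - ‖(0:ℂ)‖ ^ 2) *
      ‖deriv (fun w => f w * G w) 0‖ :=
    mul_nonneg (weight_pos (Metric.mem_ball_self one_pos)).le (norm_nonneg _)
  have hsup : sSup (blochSet (fun z => f z * G z)) ≤ n - ‖f 0 * G 0‖ := by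
    apply sSup_blochSet_le (by linarith)
    intro z hz
    linarith [hpt z hz]
  rw [bN]
  have : ‖(fun z => f z * G z) 0‖ = ‖f 0 * G 0‖ := rfl
  rw [this]
  linarith


/-- Uniform bound for the multiplication operator, via a hand-rolled Baire category argument. -/
lemma mul_bound (A : Set (ℂ → ℂ))
    (hBloch : ∀ f ∈ A, DifferentiableOn ℂ f (Metric.ball 0 1) ∧ BddAbove (blochSet f))
    (hadd : ∀ f ∈ A, ∀ g ∈ A, (fun z => f z + g z) ∈ A)
    (hsmul : ∀ (c : ℂ), ∀ f ∈ A, (fun z => c * f z) ∈ A)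
    (hmul : ∀ f ∈ A, ∀ g ∈ A, (fun z => f z * g z) ∈ A)
    (hclosed : ∀ g : ℂ → ℂ, DifferentiableOn ℂ g (Metric.ball 0 1) → BddAbove (blochSet g) →
      (∀ ε : ℝ, 0 < ε → ∃ f ∈ A, blochDist f g < ε) → g ∈ A)
    {f : ℂ → ℂ} (hfA : f ∈ A) :
    ∃ C : ℝ, 0 ≤ C ∧ ∀ g ∈ A, bN (fun z => f z * g z) ≤ C * bN g := by
  classical
  have hB : ∀ g ∈ A, IsBloch g := hBloch
  by_cases hcase : ∃ (n : ℕ), ∃ h₀ ∈ A, ∃ r : ℝ, 0 < r ∧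
      ∀ g ∈ A, blochDist g h₀ < r → bN (fun z => f z * g z) ≤ (n : ℝ)
  · -- the bounded case
    obtain ⟨n, h₀, hh₀A, r, hrpos, hball⟩ := hcase
    refine ⟨4 * n / r, by positivity, ?_⟩
    intro g hgA
    have hIBg : IsBloch g := hB g hgA
    have hIBfg : IsBloch (fun z => f z * g z) := hB _ (hmul f hfA g hgA)
    have key : ∀ δ : ℝ, 0 < δ → bN (fun z => f z * g z) ≤ 4 * n / r * (bN g + δ) := by
      intro δ hδ
      set t := bN g with ht
      have htnn : 0 ≤ t := bN_nonneg hIBg.2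
      set c : ℝ := r / (2 * (t + δ)) with hc
      have hcpos : 0 < c := by positivity
      set h' : ℂ → ℂ := fun z => h₀ z + (c : ℂ) * g z with hh'
      have hsm : (fun z => (c : ℂ) * g z) ∈ A := hsmul (c : ℂ) g hgA
      have hh'A : h' ∈ A := hadd h₀ hh₀A _ hsm
      have habsc : ‖((c : ℝ) : ℂ)‖ = c := by
        rw [Complex.norm_real, Real.norm_eq_abs, abs_of_pos hcpos]
      have hdfun : (fun z => h' z - h₀ z) = fun z => (c : ℂ) * g z := by
        funext z; simp only [hh']; ring
      have hdist : blochDist h' h₀ = c * t := by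
        rw [blochDist_eq, hdfun, bN_smul hIBg, habsc, ht]
      have hct : c * t < r := by
        rw [hc, div_mul_eq_mul_div, div_lt_iff₀ (by positivity)]
        nlinarith
      have b1 : bN (fun z => f z * h' z) ≤ (n : ℝ) := by
        apply hball h' hh'A
        rw [hdist]; exact hct
      have b2 : bN (fun z => f z * h₀ z) ≤ (n : ℝ) := by
        apply hball h₀ hh₀A
        rw [blochDist_self]; exact hrpos
      have hIB1 : IsBloch (fun z => f z * h' z) := hB _ (hmul f hfA h' hh'A)
      have hIB2 : IsBloch (fun z => f z * h₀ z) := hB _ (hmul f hfA h₀ hh₀A)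
      have hfe : (fun z => ((c : ℝ) : ℂ) * (f z * g z))
          = fun z => (f z * h' z) - (f z * h₀ z) := by
        funext z; simp only [hh']; ring
      have h3 : bN (fun z => ((c : ℝ) : ℂ) * (f z * g z)) ≤ 2 * n := by
        rw [hfe]
        exact (bN_sub_le hIB1 hIB2).trans (by linarith)
      have h4 : c * bN (fun z => f z * g z) ≤ 2 * n := by
        rw [← habsc, ← bN_smul hIBfg]
        exact h3
      have h5 : bN (fun z => f z * g z) ≤ 2 * n / c := by
        rw [le_div_iff₀ hcpos]
        linarith [h4, mul_comm c (bN (fun z => f z * g z))]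
      calc bN (fun z => f z * g z) ≤ 2 * n / c := h5
        _ = 4 * n / r * (t + δ) := by
            rw [hc]
            field_simp
            ring
    by_contra hlt
    push_neg at hlt
    set q : ℝ := 4 * n / r with hq
    have hqnn : 0 ≤ q := by positivity
    set ε : ℝ := bN (fun z => f z * g z) - q * bN g with hε
    have hεpos : 0 < ε := by rw [hε]; linarith
    have := key (ε / (q + 1)) (by positivity)
    have hqq : q * (ε / (q + 1)) < ε := by
      rw [div_eq_inv_mul, ← mul_assoc]
      have h1 : q * (q + 1)⁻¹ < 1 := by
        rw [mul_inv_lt_iff₀ (by positivity)]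
        linarith
      nlinarith
    have hexp : q * (bN g + ε / (q + 1)) = q * bN g + q * (ε / (q + 1)) := by ring
    rw [hexp] at this
    rw [hε] at this hqq
    linarith
  · -- the unbounded case : contradiction via Baire
    exfalso
    push_neg at hcase
    -- openness of the complement
    have hopen : ∀ g' ∈ A, ∀ k : ℕ, (k : ℝ) < bN (fun z => f z * g' z) →
        ∃ ρ : ℝ, 0 < ρ ∧ ∀ h ∈ A, blochDist h g' ≤ ρ →
          (k : ℝ) < bN (fun z => f z * h z) := by
      intro g' hg'A k hk
      by_contra hcon
      push_neg at hcon
      have hc' : ∀ j : ℕ, ∃ h ∈ A, blochDist h g' ≤ 1 / ((j : ℝ) + 1) ∧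
          bN (fun z => f z * h z) ≤ (k : ℝ) := by
        intro j
        exact hcon (1 / ((j : ℝ) + 1)) (by positivity)
      choose hs hsA hsd hsb using hc'
      have hdist0 : Filter.Tendsto (fun j => blochDist (hs j) g') Filter.atTop (nhds 0) := by
        apply squeeze_zero (fun j => blochDist_nonneg (hB _ (hsA j)) (hB g' hg'A)) hsd
        exact tendsto_one_div_add_atTop_nhds_zero_nat
      have := bN_mul_lsc (hB f hfA) (hB g' hg'A) (fun j => hB _ (hsA j))
        (fun j => hB _ (hmul f hfA _ (hsA j))) (hB _ (hmul f hfA g' hg'A)) hdist0 hsb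
      linarith
    -- the recursive construction
    set T := {p : (ℂ → ℂ) × ℝ // p.1 ∈ A ∧ 0 < p.2} with hT
    have step : ∀ (k : ℕ) (p : T), ∃ q : T,
        blochDist q.val.1 p.val.1 < p.val.2 / 4 ∧ q.val.2 ≤ p.val.2 / 4 ∧
        ∀ h ∈ A, blochDist h q.val.1 ≤ q.val.2 → (k : ℝ) < bN (fun z => f z * h z) := by
      intro k p
      obtain ⟨g', hg'A, hgd, hgk⟩ := hcase k p.val.1 p.2.1 (p.val.2 / 4) (by linarith [p.2.2])
      obtain ⟨ρ, hρpos, hρ⟩ := hopen g' hg'A k hgk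
      refine ⟨⟨(g', min ρ (p.val.2 / 4)), hg'A, lt_min hρpos (by linarith [p.2.2])⟩,
        hgd, min_le_right _ _, ?_⟩
      intro h hh hd
      exact hρ h hh (hd.trans (min_le_left _ _))
    choose nxt hnxt1 hnxt2 hnxt3 using step
    set seq : ℕ → T := fun k => Nat.rec (motive := fun _ => T) ⟨(f, 1), hfA, one_pos⟩
      (fun k ih => nxt k ih) k with hseqdef
    set G : ℕ → ℂ → ℂ := fun k => (seq k).val.1 with hGdef
    set R : ℕ → ℝ := fun k => (seq k).val.2 with hRdef
    have hGA : ∀ k, G k ∈ A := fun k => (seq k).2.1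
    have hRpos : ∀ k, 0 < R k := fun k => (seq k).2.2
    have hd : ∀ k, blochDist (G (k + 1)) (G k) < R k / 4 := fun k => hnxt1 k (seq k)
    have hr4 : ∀ k, R (k + 1) ≤ R k / 4 := fun k => hnxt2 k (seq k)
    have hprop : ∀ k, ∀ h ∈ A, blochDist h (G (k + 1)) ≤ R (k + 1) →
        (k : ℝ) < bN (fun z => f z * h z) := fun k => hnxt3 k (seq k)
    have hR0 : R 0 = 1 := rfl
    have hRle : ∀ n k, R (n + k) ≤ (4 : ℝ)⁻¹ ^ k * R n := by
      intro n k
      induction k with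
      | zero => simp
      | succ k ih =>
        have := hr4 (n + k)
        have h4 : ((4:ℝ)⁻¹) ^ (k+1) * R n = ((4:ℝ)⁻¹ ^ k * R n) / 4 := by
          rw [pow_succ]; ring
        rw [show n + (k+1) = (n + k) + 1 from rfl, h4]
        have := hRpos (n + k)
        linarith
    have hRgeom : ∀ k, R k ≤ (4 : ℝ)⁻¹ ^ k := by
      intro k
      have := hRle 0 k
      simpa [hR0] using this
    have hDD : ∀ n k, blochDist (G (n + k)) (G n) ≤ R n / 2 - R n / 2 * (4 : ℝ)⁻¹ ^ k := by
      intro n k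
      induction k with
      | zero => simp [blochDist_self]
      | succ k ih =>
        have htri := blochDist_triangle (hB _ (hGA (n + k + 1))) (hB _ (hGA (n + k)))
          (hB _ (hGA n))
        have h1 := hd (n + k)
        have h2 := hRle n k
        have h3 := hRpos n
        have h4 : (0:ℝ) < (4 : ℝ)⁻¹ ^ k := by positivity
        have hps : (4 : ℝ)⁻¹ ^ (k + 1) = (4 : ℝ)⁻¹ ^ k * 4⁻¹ := pow_succ _ _
        rw [show n + (k+1) = (n + k) + 1 from rfl]
        rw [hps]
        nlinarith
    have hDle : ∀ n k, blochDist (G (n + k)) (G n) ≤ R n / 2 := by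
      intro n k
      have h1 := hDD n k
      have h2 := hRpos n
      have h3 : (0:ℝ) ≤ (4 : ℝ)⁻¹ ^ k := by positivity
      nlinarith
    -- Cauchy
    have hCauchy : ∀ ε : ℝ, 0 < ε → ∃ N, ∀ m ≥ N, ∀ n ≥ N,
        blochDist (G m) (G n) ≤ ε := by
      intro ε hε
      obtain ⟨N, hN⟩ := exists_pow_lt_of_lt_one hε (show (4:ℝ)⁻¹ < 1 by norm_num)
      refine ⟨N, fun m hm n hn => ?_⟩
      obtain ⟨a, rfl⟩ := Nat.exists_eq_add_of_le hm
      obtain ⟨b, rfl⟩ := Nat.exists_eq_add_of_le hn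
      have htri := blochDist_triangle (hB _ (hGA (N + a))) (hB _ (hGA N)) (hB _ (hGA (N + b)))
      have hcm := blochDist_comm (hB _ (hGA (N + b))).1 (hB _ (hGA N)).1
      have h1 := hDle N a
      have h2 := hDle N b
      have h3 := hRgeom N
      rw [← hcm] at htri
      linarith
    obtain ⟨Gl, hGlB, hconv⟩ := bloch_complete (fun k => hB _ (hGA k)) hCauchy
    have hGlA : Gl ∈ A := by
      apply hclosed Gl hGlB.1 hGlB.2
      intro ε hε
      obtain ⟨N, hN⟩ := hconv (ε / 2) (by linarith)
      exact ⟨G N, hGA N, lt_of_le_of_lt (hN N le_rfl) (by linarith)⟩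
    have claim : ∀ k : ℕ, (k : ℝ) < bN (fun z => f z * Gl z) := by
      intro k
      apply hprop k Gl hGlA
      -- blochDist Gl (G (k+1)) ≤ R (k+1)
      obtain ⟨N₂, hN₂⟩ := hconv (R (k + 1) / 2) (by linarith [hRpos (k + 1)])
      set m := max (k + 1) N₂ with hm
      obtain ⟨a, ha⟩ := Nat.exists_eq_add_of_le (le_max_left (k + 1) N₂)
      have h1 : blochDist (G m) (G (k + 1)) ≤ R (k + 1) / 2 := by
        rw [hm, ha]; exact hDle (k + 1) a
      have h2 : blochDist (G m) Gl ≤ R (k + 1) / 2 := hN₂ m (le_max_right _ _)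
      have hcm : blochDist Gl (G (k + 1)) = blochDist (G (k + 1)) Gl :=
        blochDist_comm hGlB.1 (hB _ (hGA (k + 1))).1
      have htri := blochDist_triangle (hB _ (hGA (k + 1))) (hB _ (hGA m)) hGlB
      have hcm2 : blochDist (G (k + 1)) (G m) = blochDist (G m) (G (k + 1)) :=
        blochDist_comm (hB _ (hGA (k + 1))).1 (hB _ (hGA m)).1
      rw [hcm]
      rw [hcm2] at htri
      linarith
    have hfin : IsBloch (fun z => f z * Gl z) := hB _ (hmul f hfA Gl hGlA)
    obtain ⟨k, hk⟩ := exists_nat_gt (bN (fun z => f z * Gl z))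
    exact absurd (claim k) (by linarith)


end BlochAux

open BlochAux in
/-- A subalgebra of the Bloch space that is closed in the Bloch norm consists of
bounded functions. -/
theorem stmt10 (A : Set (ℂ → ℂ))
    (hBloch : ∀ f ∈ A, DifferentiableOn ℂ f (Metric.ball 0 1) ∧ BddAbove (blochSet f))
    (hadd : ∀ f ∈ A, ∀ g ∈ A, (fun z => f z + g z) ∈ A)
    (hsmul : ∀ (c : ℂ), ∀ f ∈ A, (fun z => c * f z) ∈ A)
    (hmul : ∀ f ∈ A, ∀ g ∈ A, (fun z => f z * g z) ∈ A)
    (hclosed : ∀ g : ℂ → ℂ, DifferentiableOn ℂ g (Metric.ball 0 1) → BddAbove (blochSet g) →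
      (∀ ε : ℝ, 0 < ε → ∃ f ∈ A, blochDist f g < ε) → g ∈ A) :
    ∀ f ∈ A, BddAbove ((fun z : ℂ => ‖f z‖) '' Metric.ball 0 1) := by
  intro f hfA
  have hB : ∀ g ∈ A, IsBloch g := hBloch
  obtain ⟨C, hC0, hC⟩ := mul_bound A hBloch hadd hsmul hmul hclosed hfA
  set C' : ℝ := max C 1 with hC'def
  have hC'1 : (1:ℝ) ≤ C' := le_max_right _ _
  have hC'pos : (0:ℝ) < C' := lt_of_lt_of_le one_pos hC'1
  have hCle : C ≤ C' := le_max_left _ _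
  have hpow : ∀ n : ℕ, (fun z => f z ^ (n + 1)) ∈ A ∧
      bN (fun z => f z ^ (n + 1)) ≤ C' ^ n * bN f := by
    intro n
    induction n with
    | zero =>
      have h1 : (fun z => f z ^ 1) = f := by funext z; rw [pow_one]
      rw [h1]
      exact ⟨hfA, by simp⟩
    | succ n ih =>
      have hmem : (fun z => f z * f z ^ (n + 1)) ∈ A := hmul f hfA _ ih.1
      have heq : (fun z : ℂ => f z ^ (n + 1 + 1)) = fun z => f z * f z ^ (n + 1) := by
        funext z; ring
      rw [heq]
      refine ⟨hmem, ?_⟩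
      calc bN (fun z => f z * f z ^ (n + 1)) ≤ C * bN (fun z => f z ^ (n + 1)) :=
            hC _ ih.1
        _ ≤ C' * (C' ^ n * bN f) := by
            apply mul_le_mul hCle ih.2 (bN_nonneg (hB _ ih.1).2) hC'pos.le
        _ = C' ^ (n + 1) * bN f := by ring
  refine ⟨C', ?_⟩
  rintro x ⟨z, hz, rfl⟩
  show ‖f z‖ ≤ C'
  by_contra hgt
  push_neg at hgt
  set r : ℝ := ‖z‖ with hrdef
  have h0r : 0 ≤ r := norm_nonneg z
  have hr1 : r < 1 := abs_lt_one hz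
  set D : ℝ := (1 + KR r) * bN f with hDdef
  set a : ℝ := ‖f z‖ with hadef
  have key : ∀ n : ℕ, a ^ (n + 1) ≤ C' ^ n * D := by
    intro n
    have h1 : ‖(fun z => f z ^ (n + 1)) z‖ ≤
        (1 + KR r) * bN (fun z => f z ^ (n + 1)) :=
      abs_le_bN (hB _ (hpow n).1) h0r hr1 le_rfl
    have h2 : ‖f z ^ (n + 1)‖ = a ^ (n + 1) := by
      rw [hadef, norm_pow]
    have h3 : (0:ℝ) ≤ 1 + KR r := by linarith [KR_nonneg h0r hr1]
    calc a ^ (n + 1) = ‖(fun z => f z ^ (n + 1)) z‖ := h2.symm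
      _ ≤ (1 + KR r) * bN (fun z => f z ^ (n + 1)) := h1
      _ ≤ (1 + KR r) * (C' ^ n * bN f) := mul_le_mul_of_nonneg_left (hpow n).2 h3
      _ = C' ^ n * D := by rw [hDdef]; ring
  set q : ℝ := a / C' with hqdef
  have hq : 1 < q := (one_lt_div hC'pos).mpr hgt
  have hq1 : ∀ n : ℕ, q ^ (n + 1) ≤ D / C' := by
    intro n
    have h1 := key n
    rw [hqdef, div_pow, div_le_div_iff₀ (by positivity) hC'pos]
    calc a ^ (n + 1) * C' ≤ (C' ^ n * D) * C' :=
          mul_le_mul_of_nonneg_right h1 hC'pos.le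
      _ = D * C' ^ (n + 1) := by ring
  obtain ⟨m, hm⟩ := pow_unbounded_of_one_lt (D / C') hq
  have h2 : q ^ m ≤ q ^ (m + 1) := pow_le_pow_right₀ hq.le (Nat.le_succ m)
  have h3 := hq1 m
  linarith
end
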